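/- Let N ≥ 2, d ≥ 2, and ε > 0. In the 2-mixture model, there exist points u₁,...,u_N on the unit sphere of ℝ^d and a Gaussian kernel k with RKHS H such that the embeddings h((i,j)) := (√N/2)(k(uᵢ,·) + k(uⱼ,·)) satisfy |⟨h((i,j)), h((s,t))⟩_H - exp(PMI((i,j),(s,t)))| < ε for all unordered pairs (i,j), (s,t), where exp(PMI((i,j),(s,t))) = (N/4)(δ^{is}+δ^{it}+δ^{js}+δ^{jt}). -/

import Mathlib

open scoped RealInnerProductSpace

/-- Kronecker delta as a real number. -/
noncomputable def kdelta {N : ℕ} (i ℓ : Fin N) : ℝ := if i = ℓ then 1 else 0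

lemma exists_min_sep {n : ℕ} {E : Type*} [NormedAddCommGroup E] (u : Fin n → E)
    (hinj : Function.Injective u) (hn : 2 ≤ n) :
    ∃ D : ℝ, 0 < D ∧ ∀ a b : Fin n, a ≠ b → D ≤ ‖u a - u b‖ := by
  have hP : (Finset.univ.filter fun p : Fin n × Fin n => p.1 ≠ p.2).Nonempty := by
    refine ⟨(⟨0, by omega⟩, ⟨1, by omega⟩), Finset.mem_filter.mpr ⟨Finset.mem_univ _, ?_⟩⟩
    intro h
    exact absurd (congrArg Fin.val h) (by norm_num)
  refine ⟨(Finset.univ.filter fun p : Fin n × Fin n => p.1 ≠ p.2).inf' hP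
      (fun p => ‖u p.1 - u p.2‖), ?_, ?_⟩
  · rw [Finset.lt_inf'_iff]
    intro p hp
    have hp' : p.1 ≠ p.2 := by simpa using hp
    exact norm_sub_pos_iff.mpr fun h => hp' (hinj h)
  · intro a b hab
    have hmem : (a, b) ∈ Finset.univ.filter fun p : Fin n × Fin n => p.1 ≠ p.2 :=
      Finset.mem_filter.mpr ⟨Finset.mem_univ (a, b), hab⟩
    exact Finset.inf'_le (fun p => ‖u p.1 - u p.2‖) hmem

/-- KME-CLIP can approximate the exponential PMI of the 2-mixture model arbitrarily well:
for `N ≥ 2`, `d ≥ 2`, `ε > 0`, there exist points `u₁, …, u_N` on the unit sphere of `ℝ^d`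
and a Gaussian length-scale `σ > 0` such that, for any realization of the Gaussian RKHS
by a feature map `φ` (i.e. `⟪φ a, φ b⟫ = exp(-‖a-b‖²/(2σ²))`), the embeddings
`h((i,j)) = (√N/2)(k(uᵢ,·) + k(uⱼ,·))` satisfy
`|⟨h((i,j)), h((s,t))⟩_H - (N/4)(δ^{is}+δ^{it}+δ^{js}+δ^{jt})| < ε` for all pairs, where
`(N/4)(δ^{is}+δ^{it}+δ^{js}+δ^{jt}) = exp(PMI((i,j),(s,t)))` in the 2-mixture model. -/
theorem kme_clip_approximates_expPMI_two_mixture (N d : ℕ) (hN : 2 ≤ N) (hd : 2 ≤ d)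
    (ε : ℝ) (hε : 0 < ε) :
    ∃ u : Fin N → EuclideanSpace ℝ (Fin d),
      (∀ i, ‖u i‖ = 1) ∧
      ∃ σ : ℝ, 0 < σ ∧
        ∀ (H : Type) (_ : NormedAddCommGroup H) (_ : InnerProductSpace ℝ H)
          (φ : EuclideanSpace ℝ (Fin d) → H),
          (∀ a b, ⟪φ a, φ b⟫ = Real.exp (-‖a - b‖ ^ 2 / (2 * σ ^ 2))) →
          ∀ i j s t : Fin N,
            |(⟪(Real.sqrt N / 2) • (φ (u i) + φ (u j)),
                (Real.sqrt N / 2) • (φ (u s) + φ (u t))⟫ : ℝ) -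
              ((N : ℝ) / 4) * (kdelta i s + kdelta i t + kdelta j s + kdelta j t)| < ε := by
  have hNpos : (0:ℝ) < N := by exact_mod_cast Nat.lt_of_lt_of_le (by norm_num) hN
  set θ : Fin N → ℝ := fun i => i * Real.pi / N with hθ
  set i0 : Fin d := ⟨0, by omega⟩ with hi0
  set i1 : Fin d := ⟨1, by omega⟩ with hi1
  have hi01 : i0 ≠ i1 := by simp [hi0, hi1, Fin.ext_iff]
  set u : Fin N → EuclideanSpace ℝ (Fin d) :=
    fun i => WithLp.toLp 2 (fun m => if m = i0 then Real.cos (θ i) else if m = i1 then Real.sin (θ i) else 0)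
    with hu
  -- norms
  have hsum : ∀ i : Fin N, ∑ m : Fin d, (u i m) ^ 2 = 1 := by
    intro i
    have hpt : ∀ m : Fin d, (u i m) ^ 2 =
        (if m = i0 then Real.cos (θ i) ^ 2 else 0) +
        (if m = i1 then Real.sin (θ i) ^ 2 else 0) := by
      intro m
      have humm : u i m = if m = i0 then Real.cos (θ i) else if m = i1 then Real.sin (θ i)
          else 0 := rfl
      rw [humm]
      by_cases h0 : m = i0
      · have h1 : m ≠ i1 := h0 ▸ hi01
        simp [h0, h1, hi01]
      · by_cases h1 : m = i1 <;> simp [h0, h1, hi01, Ne.symm hi01]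
    calc ∑ m : Fin d, (u i m) ^ 2
        = ∑ m : Fin d, ((if m = i0 then Real.cos (θ i) ^ 2 else 0) +
            (if m = i1 then Real.sin (θ i) ^ 2 else 0)) := by
          exact Finset.sum_congr rfl fun m _ => hpt m
      _ = Real.cos (θ i) ^ 2 + Real.sin (θ i) ^ 2 := by
          rw [Finset.sum_add_distrib, Finset.sum_ite_eq' Finset.univ i0,
            Finset.sum_ite_eq' Finset.univ i1]
          simp
      _ = 1 := by rw [add_comm]; exact Real.sin_sq_add_cos_sq _
  have hnorm : ∀ i, ‖u i‖ = 1 := by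
    intro i
    rw [EuclideanSpace.norm_eq]
    have : ∀ m : Fin d, ‖u i m‖ ^ 2 = (u i m) ^ 2 := fun m => sq_abs _
    simp only [this, hsum i, Real.sqrt_one]
  -- injectivity
  have hinj : Function.Injective u := by
    intro a b hab
    have h0 : Real.cos (θ a) = Real.cos (θ b) := by
      have h := congrFun (congrArg WithLp.ofLp hab) i0
      have ha : u a i0 = Real.cos (θ a) := by simp [hu]
      have hb : u b i0 = Real.cos (θ b) := by simp [hu]
      rw [ha, hb] at h
      exact h
    have hmem : ∀ c : Fin N, θ c ∈ Set.Icc 0 Real.pi := by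
      intro c
      constructor
      · exact div_nonneg (mul_nonneg (Nat.cast_nonneg _) Real.pi_pos.le) hNpos.le
      · rw [div_le_iff₀ hNpos]
        have : (c : ℝ) ≤ N := by exact_mod_cast (c.is_lt).le
        nlinarith [Real.pi_pos]
    have hθab : θ a = θ b := Real.injOn_cos (hmem a) (hmem b) h0
    have hval : ((a : ℕ) : ℝ) = ((b : ℕ) : ℝ) := by
      have hπ : Real.pi ≠ 0 := Real.pi_ne_zero
      have h' : ((a : ℕ) : ℝ) * Real.pi / N = ((b : ℕ) : ℝ) * Real.pi / N := hθab
      rw [div_left_inj' hNpos.ne', mul_left_inj' hπ] at h'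
      exact h'
    exact Fin.ext (by exact_mod_cast hval)
  -- minimum separation
  obtain ⟨D, hDpos, hDle⟩ := exists_min_sep u hinj hN
  -- length scale
  set c : ℝ := max 1 (Real.log (N / ε) + 1) with hc
  have hcpos : (0:ℝ) < c := lt_of_lt_of_le one_pos (le_max_left _ _)
  set σ : ℝ := D / Real.sqrt (2 * c) with hσ
  have hsqrtpos : 0 < Real.sqrt (2 * c) := Real.sqrt_pos.mpr (by linarith)
  have hσpos : 0 < σ := div_pos hDpos hsqrtpos
  have hσsq : 2 * σ ^ 2 = D ^ 2 / c := by
    rw [hσ, div_pow, Real.sq_sqrt (by linarith : (0:ℝ) ≤ 2 * c)]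
    field_simp
  -- bound on off-diagonal kernel
  have hη : Real.exp (-c) < ε / N := by
    have h1 : Real.exp (-c) ≤ Real.exp (-(Real.log (N / ε) + 1)) :=
      Real.exp_le_exp.mpr (neg_le_neg (le_max_right _ _))
    have h2 : Real.exp (-(Real.log (N / ε) + 1)) < Real.exp (-Real.log (N / ε)) :=
      Real.exp_lt_exp.mpr (by linarith)
    have h3 : Real.exp (-Real.log (N / ε)) = ε / N := by
      rw [Real.exp_neg, Real.exp_log (div_pos hNpos hε)]
      simp [one_div]
    linarith
  refine ⟨u, hnorm, σ, hσpos, ?_⟩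
  intro H _ _ φ hφ i j s t
  have key : ∀ a b : Fin N, |(⟪φ (u a), φ (u b)⟫ : ℝ) - kdelta a b| ≤ Real.exp (-c) := by
    intro a b
    by_cases hab : a = b
    · subst hab
      rw [hφ, kdelta]
      simp [Real.exp_nonneg]
    · rw [hφ, kdelta, if_neg hab, sub_zero, abs_of_pos (Real.exp_pos _),
        Real.exp_le_exp]
      rw [div_le_iff₀ (by positivity : (0:ℝ) < 2 * σ ^ 2)] at *
      have hD2 : D ^ 2 ≤ ‖u a - u b‖ ^ 2 :=
        pow_le_pow_left₀ hDpos.le (hDle a b hab) 2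
      rw [hσsq]
      have : -c * (D ^ 2 / c) = -D ^ 2 := by field_simp
      rw [this]
      linarith
  have hexpand : (⟪(Real.sqrt N / 2) • (φ (u i) + φ (u j)),
      (Real.sqrt N / 2) • (φ (u s) + φ (u t))⟫ : ℝ) =
      ((N:ℝ) / 4) * (⟪φ (u i), φ (u s)⟫ + ⟪φ (u i), φ (u t)⟫ +
        ⟪φ (u j), φ (u s)⟫ + ⟪φ (u j), φ (u t)⟫) := by
    rw [real_inner_smul_left, real_inner_smul_right, inner_add_left, inner_add_right,
      inner_add_right]
    have : Real.sqrt N / 2 * (Real.sqrt N / 2) = (N:ℝ) / 4 := by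
      rw [div_mul_div_comm, Real.mul_self_sqrt hNpos.le]
      norm_num
    rw [← mul_assoc, this]
    ring
  rw [hexpand]
  have e1 := key i s
  have e2 := key i t
  have e3 := key j s
  have e4 := key j t
  have habs : |((N:ℝ) / 4) * ((⟪φ (u i), φ (u s)⟫ - kdelta i s) + (⟪φ (u i), φ (u t)⟫ - kdelta i t) +
      (⟪φ (u j), φ (u s)⟫ - kdelta j s) + (⟪φ (u j), φ (u t)⟫ - kdelta j t))| < ε := by
    rw [abs_mul, abs_of_pos (by positivity : (0:ℝ) < (N:ℝ)/4)]
    have hsum4 : |(⟪φ (u i), φ (u s)⟫ - kdelta i s) + (⟪φ (u i), φ (u t)⟫ - kdelta i t) +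
        (⟪φ (u j), φ (u s)⟫ - kdelta j s) + (⟪φ (u j), φ (u t)⟫ - kdelta j t)| ≤
        4 * Real.exp (-c) := by
      calc _ ≤ |(⟪φ (u i), φ (u s)⟫ - kdelta i s) + (⟪φ (u i), φ (u t)⟫ - kdelta i t) +
          (⟪φ (u j), φ (u s)⟫ - kdelta j s)| + |(⟪φ (u j), φ (u t)⟫ - kdelta j t)| :=
            abs_add_le _ _
        _ ≤ (|(⟪φ (u i), φ (u s)⟫ - kdelta i s) + (⟪φ (u i), φ (u t)⟫ - kdelta i t)| +
            |(⟪φ (u j), φ (u s)⟫ - kdelta j s)|) + |(⟪φ (u j), φ (u t)⟫ - kdelta j t)| := by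
            gcongr; exact abs_add_le _ _
        _ ≤ ((|(⟪φ (u i), φ (u s)⟫ - kdelta i s)| + |(⟪φ (u i), φ (u t)⟫ - kdelta i t)|) +
            |(⟪φ (u j), φ (u s)⟫ - kdelta j s)|) + |(⟪φ (u j), φ (u t)⟫ - kdelta j t)| := by
            gcongr; exact abs_add_le _ _
        _ ≤ 4 * Real.exp (-c) := by linarith
    calc (N:ℝ)/4 * |_| ≤ (N:ℝ)/4 * (4 * Real.exp (-c)) := by
          exact mul_le_mul_of_nonneg_left hsum4 (by positivity)
      _ = (N:ℝ) * Real.exp (-c) := by ring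
      _ < (N:ℝ) * (ε / N) := by
          exact mul_lt_mul_of_pos_left hη hNpos
      _ = ε := by field_simp
  have : ((N:ℝ) / 4) * (⟪φ (u i), φ (u s)⟫ + ⟪φ (u i), φ (u t)⟫ +
        ⟪φ (u j), φ (u s)⟫ + ⟪φ (u j), φ (u t)⟫) -
      ((N : ℝ) / 4) * (kdelta i s + kdelta i t + kdelta j s + kdelta j t) =
      ((N:ℝ) / 4) * ((⟪φ (u i), φ (u s)⟫ - kdelta i s) + (⟪φ (u i), φ (u t)⟫ - kdelta i t) +
      (⟪φ (u j), φ (u s)⟫ - kdelta j s) + (⟪φ (u j), φ (u t)⟫ - kdelta j t)) := by ring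
  rw [this]
  exact habs
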